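/- Let f be a non-increasing nonnegative function on {1,…,k}, and let I_v and I_w be adjacent intervals of equal cardinality with I_w immediately to the right of I_v. Then Σ_{x∈I_v} |f̄_{I_v} − f(x)| ≤ 2 (f_{I_v} − f_{I_w}). -/

import Mathlib

open Finset

/-- Let `f` be a non-increasing nonnegative function on `{1, …, k}` and let
`I_v = {a, …, a + m - 1}` and `I_w = {a + m, …, a + 2m - 1}` be adjacent intervals of
equal cardinality in `{1, …, k}`, with `I_w` immediately to the right of `I_v`. Then
`∑_{x ∈ I_v} |f̄_{I_v} - f x| ≤ 2 (f_{I_v} - f_{I_w})`, where `f_I = ∑_{x ∈ I} f x`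
and `f̄_I = f_I / |I|`. -/
theorem stmt8 (k a m : ℕ) (ha : 1 ≤ a) (hm : 1 ≤ m) (hk : a + 2 * m ≤ k + 1)
    (f : ℕ → ℝ) (hf0 : ∀ x, 0 ≤ f x)
    (hmono : ∀ x, 1 ≤ x → x + 1 ≤ k → f (x + 1) ≤ f x) :
    ∑ x ∈ Finset.Ico a (a + m),
        |(∑ y ∈ Finset.Ico a (a + m), f y) / (m : ℝ) - f x| ≤
      2 * (∑ x ∈ Finset.Ico a (a + m), f x - ∑ x ∈ Finset.Ico (a + m) (a + 2 * m), f x) := by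
  have hmono' : ∀ x y, 1 ≤ x → x ≤ y → y ≤ k → f y ≤ f x := by
    intro x y hx hxy hyk
    induction y with
    | zero => omega
    | succ n ih =>
      rcases Nat.eq_or_lt_of_le hxy with h | h
      · rw [h]
      · exact le_trans (hmono n (by omega) (by omega)) (ih (by omega) (by omega))
  set S := ∑ y ∈ Finset.Ico a (a + m), f y with hS
  have hmpos : (0 : ℝ) < m := by exact_mod_cast hm
  -- f (x + m) ≤ S / m for x in I_v
  have hμ : ∀ x ∈ Finset.Ico a (a + m), f (x + m) ≤ S / m := by
    intro x hx
    rw [Finset.mem_Ico] at hx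
    rw [le_div_iff₀ hmpos]
    have : ∑ y ∈ Finset.Ico a (a + m), f (x + m) ≤ S := by
      apply Finset.sum_le_sum
      intro y hy
      rw [Finset.mem_Ico] at hy
      exact hmono' y (x + m) (by omega) (by omega) (by omega)
    simpa [Nat.card_Ico, mul_comm] using this
  have hfx : ∀ x ∈ Finset.Ico a (a + m), f (x + m) ≤ f x := by
    intro x hx
    rw [Finset.mem_Ico] at hx
    exact hmono' x (x + m) (by omega) (by omega) (by omega)
  have hsum2 : ∑ x ∈ Finset.Ico (a + m) (a + 2 * m), f x
      = ∑ x ∈ Finset.Ico a (a + m), f (x + m) := by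
    rw [Finset.sum_Ico_eq_sum_range, Finset.sum_Ico_eq_sum_range]
    have h1 : a + 2 * m - (a + m) = m := by omega
    have h2 : a + m - a = m := by omega
    rw [h1, h2]
    apply Finset.sum_congr rfl
    intro i _
    congr 1
    omega
  have hterm : ∀ x ∈ Finset.Ico a (a + m),
      |S / m - f x| ≤ (S / m - f x) + 2 * (f x - f (x + m)) := by
    intro x hx
    have h1 := hμ x hx
    have h2 := hfx x hx
    rcases abs_cases (S / m - f x) with ⟨he, _⟩ | ⟨he, _⟩ <;> rw [he] <;> linarith
  calc ∑ x ∈ Finset.Ico a (a + m), |S / m - f x|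
      ≤ ∑ x ∈ Finset.Ico a (a + m), ((S / m - f x) + 2 * (f x - f (x + m))) :=
        Finset.sum_le_sum hterm
    _ = (∑ x ∈ Finset.Ico a (a + m), (S / m - f x))
        + 2 * (S - ∑ x ∈ Finset.Ico a (a + m), f (x + m)) := by
        rw [Finset.sum_add_distrib, ← Finset.mul_sum, Finset.sum_sub_distrib, Finset.sum_sub_distrib, ← hS]
    _ = 2 * (S - ∑ x ∈ Finset.Ico (a + m) (a + 2 * m), f x) := by
        rw [hsum2]
        have : ∑ x ∈ Finset.Ico a (a + m), (S / m - f x) = 0 := by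
          rw [Finset.sum_sub_distrib, Finset.sum_const, Nat.card_Ico]
          have : a + m - a = m := by omega
          rw [this]
          field_simp
          rw [nsmul_eq_mul, ← hS, mul_div_cancel₀ S hmpos.ne', sub_self]
        rw [this, zero_add]
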